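/- Every division semiring has the invariant basis number property: if Dᵐ ≅ Dⁿ as right D-semimodules for a division semiring D, then m = n. -/

import Mathlib

/-- The two-element Boolean semiring: `0, 1` with `1 + 1 = 1`. -/
inductive B2 : Type | z | o
deriving DecidableEq

instance : Fintype B2 := ⟨⟨[B2.z, B2.o], by decide⟩, fun x => by cases x <;> decide⟩

namespace B2
instance : Zero B2 := ⟨z⟩
instance : One B2 := ⟨o⟩
instance : Add B2 := ⟨fun a b => match a, b with | z, z => z | _, _ => o⟩
instance : Mul B2 := ⟨fun a b => match a, b with | o, o => o | _, _ => z⟩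

instance : CommSemiring B2 where
  add_assoc := by decide
  zero_add := by decide
  add_zero := by decide
  add_comm := by decide
  mul_assoc := by decide
  one_mul := by decide
  mul_one := by decide
  zero_mul := by decide
  mul_zero := by decide
  left_distrib := by decide
  right_distrib := by decide
  mul_comm := by decide
  nsmul := nsmulRec
end B2

/-- Expansion of a linear map on `Fin p → R` in terms of its matrix. -/
theorem expand_aux {R : Type} [Semiring R] {p q : ℕ}
    (φ : (Fin p → R) →ₗ[R] (Fin q → R)) (y : Fin p → R) (k : Fin q) :
    φ y k = ∑ j, y j * φ (Pi.single j 1) k := by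
  conv_lhs => rw [← Finset.univ_sum_single y, map_sum]
  rw [Finset.sum_apply]
  refine Finset.sum_congr rfl fun j _ => ?_
  have h : (Pi.single j (y j) : Fin p → R) = y j • (Pi.single j 1 : Fin p → R) := by
    funext t
    by_cases h : t = j <;> simp [Pi.single_apply, h]
  rw [h, map_smul]
  simp

/-- If a semiring maps to `B2` by a ring hom, then it has IBN (by counting). -/
theorem aux_ibn {R : Type} [Semiring R] (F : R →+* B2) {m n : ℕ}
    (e : (Fin m → R) ≃ₗ[R] (Fin n → R)) : m = n := by
  set A : Fin m → Fin n → B2 := fun i j => F (e (Pi.single i 1) j) with hA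
  set B : Fin n → Fin m → B2 := fun j i => F (e.symm (Pi.single j 1) i) with hB
  have hAB : ∀ i k, (∑ j, A i j * B j k) = if k = i then 1 else 0 := by
    intro i k
    have h1 : e.symm (e (Pi.single i 1)) k = ∑ j, e (Pi.single i 1) j *
        e.symm (Pi.single j 1) k := expand_aux e.symm.toLinearMap _ k
    have h2 : e.symm (e (Pi.single i 1)) k = (if k = i then 1 else 0 : R) := by
      rw [e.symm_apply_apply]; simp [Pi.single_apply]
    have := congrArg F (h1.symm.trans h2)
    rw [map_sum] at this
    simpa [apply_ite F] using this
  have hBA : ∀ k i, (∑ j, B k j * A j i) = if i = k then 1 else 0 := by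
    intro k i
    have h1 : e (e.symm (Pi.single k 1)) i = ∑ j, e.symm (Pi.single k 1) j *
        e (Pi.single j 1) i := expand_aux e.toLinearMap _ i
    have h2 : e (e.symm (Pi.single k 1)) i = (if i = k then 1 else 0 : R) := by
      rw [e.apply_symm_apply]; simp [Pi.single_apply]
    have := congrArg F (h1.symm.trans h2)
    rw [map_sum] at this
    simpa [apply_ite F] using this
  have key : ∀ {p q : ℕ} (C : Fin p → Fin q → B2) (Dm : Fin q → Fin p → B2)
      (h : ∀ i k, (∑ j, C i j * Dm j k) = if k = i then 1 else 0)
      (x : Fin p → B2) (i : Fin p),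
      (∑ j, (∑ t, x t * C t j) * Dm j i) = x i := by
    intro p q C Dm h x i
    calc (∑ j, (∑ t, x t * C t j) * Dm j i)
        = ∑ j, ∑ t, x t * C t j * Dm j i := by
          refine Finset.sum_congr rfl fun j _ => ?_; rw [Finset.sum_mul]
      _ = ∑ t, ∑ j, x t * (C t j * Dm j i) := by
          rw [Finset.sum_comm]; simp [mul_assoc]
      _ = ∑ t, x t * (∑ j, C t j * Dm j i) := by
          refine Finset.sum_congr rfl fun t _ => ?_; rw [Finset.mul_sum]
      _ = ∑ t, x t * (if i = t then 1 else 0) := by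
          refine Finset.sum_congr rfl fun t _ => ?_; rw [h]
      _ = x i := by simp [mul_ite]
  let E : (Fin m → B2) ≃ (Fin n → B2) :=
    { toFun := fun x j => ∑ t, x t * A t j
      invFun := fun y i => ∑ t, y t * B t i
      left_inv := fun x => funext fun i => key A B hAB x i
      right_inv := fun y => funext fun k => key B A hBA y k }
  have hcard := Fintype.card_congr E
  simp only [Fintype.card_fun, Fintype.card_fin] at hcard
  have hB2 : Fintype.card B2 = 2 := by decide
  rw [hB2] at hcard
  exact Nat.pow_right_injective (le_refl 2) hcard

/-- A semiring has the invariant basis number (IBN) property if free semimodules of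
distinct finite ranks are non-isomorphic. -/
def HasIBN (S : Type) [Semiring S] : Prop :=
  ∀ m n : ℕ, Nonempty ((Fin m → S) ≃ₗ[S] (Fin n → S)) → m = n

/-- Every division semiring has the invariant basis number property. -/
theorem divisionSemiring_hasIBN (D : Type) [DivisionSemiring D] : HasIBN D := by
  classical
  by_cases hz : ∀ a b : D, a + b = 0 → a = 0
  · -- zerosumfree case: map to B2
    have hmap : ∀ a b : D, (if a + b = 0 then (0:B2) else 1)
        = (if a = 0 then (0:B2) else 1) + (if b = 0 then (0:B2) else 1) := by
      intro a b
      by_cases ha : a = 0 <;> by_cases hb : b = 0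
      · simp [ha, hb]
      · have : a + b ≠ 0 := fun h => hb (hz b a (by rwa [add_comm] at h))
        simp [ha, hb, this] <;> decide
      · have : a + b ≠ 0 := fun h => ha (hz a b h)
        simp [ha, hb, this] <;> decide
      · have : a + b ≠ 0 := fun h => ha (hz a b h)
        simp [ha, hb, this] <;> decide
    let F : D →+* B2 :=
      { toFun := fun d => if d = 0 then 0 else 1
        map_zero' := by simp
        map_one' := by simp
        map_mul' := by
          intro a b
          by_cases ha : a = 0 <;> by_cases hb : b = 0 <;>
            simp [ha, hb, mul_eq_zero] <;> decide
        map_add' := hmap }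
    intro m n hne
    obtain ⟨e⟩ := hne
    exact aux_ibn F e
  · -- ring case
    push_neg at hz
    obtain ⟨a, b, hab, ha⟩ := hz
    set e0 : D := a⁻¹ * b with he0
    have h1 : (1 : D) + e0 = 0 := by
      rw [he0, ← inv_mul_cancel₀ ha, ← mul_add, hab, mul_zero]
    letI : Neg D := ⟨fun x => e0 * x⟩
    letI : DivisionRing D :=
      { ‹DivisionSemiring D› with
        neg := Neg.neg
        zsmul := zsmulRec
        neg_add_cancel := by
          intro x
          show e0 * x + x = 0
          calc e0 * x + x = e0 * x + 1 * x := by rw [one_mul]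
            _ = (e0 + 1) * x := by rw [add_mul]
            _ = 0 := by rw [add_comm, h1, zero_mul]
        qsmul := _ }
    intro m n hne
    obtain ⟨e⟩ := hne
    exact eq_of_fin_equiv D e
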